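/- Let a < b, let β > 0 be a real constant, let f be continuously differentiable on [a,b], and let u be twice continuously differentiable on [a,b] with β·u''(x) = −f(x) for all x in [a,b]. Then for every x in [a,b], |u'(x) − ( (u(b)−u(a))/(b−a) − (1/(2β))·[(2x−a−b)·f(x) + (x−a)(x−b)·f'(x)] )| ≤ (7(b−a)^2/(24β)) · sup_{t∈[a,b]} |f'(t)|. -/

import Mathlib

lemma aux_mul_abs (c x : ℝ) : HasDerivAt (fun t => (t - c) * |t - c|) (2 * |x - c|) x := by
  rcases lt_trichotomy x c with h | h | h
  · have hev : (fun t => (t - c) * |t - c|) =ᶠ[nhds x] (fun t => -((t - c) * (t - c))) := by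
      filter_upwards [Iio_mem_nhds h] with t ht
      rw [abs_of_neg (sub_neg.2 ht)]; ring
    have hd : HasDerivAt (fun t => -((t - c) * (t - c))) (2 * |x - c|) x := by
      have := (((hasDerivAt_id x).sub_const c).mul ((hasDerivAt_id x).sub_const c)).neg
      convert this using 1 <;> try rfl
      rw [abs_of_neg (sub_neg.2 h)]; simp [id]; ring
    exact hd.congr_of_eventuallyEq hev
  · subst h
    rw [hasDerivAt_iff_tendsto_slope]
    have hev : slope (fun t => (t - x) * |t - x|) x =ᶠ[nhdsWithin x {x}ᶜ] (fun t => |t - x|) := by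
      filter_upwards [self_mem_nhdsWithin] with t ht
      have ht' : t - x ≠ 0 := sub_ne_zero.2 ht
      simp only [slope_def_field]
      field_simp
      simp
    rw [Filter.tendsto_congr' hev]
    have : Filter.Tendsto (fun t => |t - x|) (nhds x) (nhds |x - x|) := by
      exact ((continuous_id.sub continuous_const).abs).tendsto x
    simp only [sub_self, abs_zero] at this
    have h0 : (2 : ℝ) * |x - x| = 0 := by simp
    rw [h0]
    exact this.mono_left nhdsWithin_le_nhds
  · have hev : (fun t => (t - c) * |t - c|) =ᶠ[nhds x] (fun t => (t - c) * (t - c)) := by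
      filter_upwards [Ioi_mem_nhds h] with t ht
      rw [abs_of_pos (sub_pos.2 ht)]
    have hd : HasDerivAt (fun t => (t - c) * (t - c)) (2 * |x - c|) x := by
      have := ((hasDerivAt_id x).sub_const c).mul ((hasDerivAt_id x).sub_const c)
      convert this using 1 <;> try rfl
      rw [abs_of_pos (sub_pos.2 h)]; simp [id]; ring
    exact hd.congr_of_eventuallyEq hev

lemma aux_comp {a b : ℝ} {g g' G G' : ℝ → ℝ}
    (hg : ∀ t ∈ Set.Icc a b, HasDerivWithinAt g (g' t) (Set.Icc a b) t)
    (hG : ∀ t ∈ Set.Icc a b, HasDerivWithinAt G (G' t) (Set.Icc a b) t)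
    (hbd : ∀ t ∈ Set.Icc a b, |g' t| ≤ G' t)
    {x y : ℝ} (hx : x ∈ Set.Icc a b) (hy : y ∈ Set.Icc a b) (hxy : x ≤ y) :
    |g y - g x| ≤ G y - G x := by
  have hconv : Convex ℝ (Set.Icc a b) := convex_Icc a b
  have h1 : MonotoneOn (fun t => G t - g t) (Set.Icc a b) := by
    apply monotoneOn_of_hasDerivWithinAt_nonneg hconv
    · exact fun t ht => ((hG t ht).sub (hg t ht)).continuousWithinAt
    · intro t ht
      exact (((hG t (interior_subset ht)).sub (hg t (interior_subset ht))).mono interior_subset)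
    · intro t ht
      have := hbd t (interior_subset ht)
      have := le_abs_self (g' t)
      linarith
  have h2 : MonotoneOn (fun t => G t + g t) (Set.Icc a b) := by
    apply monotoneOn_of_hasDerivWithinAt_nonneg hconv
    · exact fun t ht => ((hG t ht).add (hg t ht)).continuousWithinAt
    · intro t ht
      exact (((hG t (interior_subset ht)).add (hg t (interior_subset ht))).mono interior_subset)
    · intro t ht
      have := hbd t (interior_subset ht)
      have := neg_abs_le (g' t)
      linarith
  have e1 : G x - g x ≤ G y - g y := h1 hx hy hxy
  have e2 : G x + g x ≤ G y + g y := h2 hx hy hxy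
  rw [abs_le]
  constructor <;> linarith

/-- Let `a < b`, `β > 0` constant, `f` continuously differentiable on `[a,b]`,
and `u` twice continuously differentiable on `[a,b]` with `β u'' = −f`.  Then for every
`x ∈ [a,b]`,
`|u' x − ((u b − u a)/(b−a) − (1/(2β))·[(2x−a−b) f x + (x−a)(x−b) f' x])|
  ≤ (7(b−a)²/(24β)) · sup_{t∈[a,b]} |f' t|`. -/
theorem posterior_corrected_interp_derivative_second_order
    (a b β : ℝ) (hab : a < b) (hβ : 0 < β) (f f' u u' u'' : ℝ → ℝ)
    (hf' : ∀ x ∈ Set.Icc a b, HasDerivWithinAt f (f' x) (Set.Icc a b) x)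
    (hf'c : ContinuousOn f' (Set.Icc a b))
    (hu' : ∀ x ∈ Set.Icc a b, HasDerivWithinAt u (u' x) (Set.Icc a b) x)
    (hu'' : ∀ x ∈ Set.Icc a b, HasDerivWithinAt u' (u'' x) (Set.Icc a b) x)
    (hu''c : ContinuousOn u'' (Set.Icc a b))
    (hode : ∀ x ∈ Set.Icc a b, β * u'' x = -f x) :
    ∀ x ∈ Set.Icc a b,
      |u' x - ((u b - u a) / (b - a)
          - 1 / (2 * β) * ((2 * x - a - b) * f x + (x - a) * (x - b) * f' x))|
        ≤ 7 * (b - a) ^ 2 / (24 * β) * ⨆ t : Set.Icc a b, |f' t| := by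
  intro x hx
  set M := ⨆ t : Set.Icc a b, |f' t| with hMdef
  have hbdd : BddAbove (Set.range fun t : Set.Icc a b => |f' t|) := by
    have himg := isCompact_Icc.bddAbove_image (hf'c.abs)
    rwa [Set.image_eq_range] at himg
  have hM : ∀ t ∈ Set.Icc a b, |f' t| ≤ M := fun t ht => le_ciSup hbdd ⟨t, ht⟩
  have hM0 : 0 ≤ M := le_trans (abs_nonneg _) (hM a (Set.left_mem_Icc.2 hab.le))
  have h2β : (0:ℝ) < 2 * β := by linarith
  have hba : b - a ≠ 0 := sub_ne_zero.2 hab.ne'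
  set c := (u b - u a) / (b - a) with hcdef
  -- E and its derivative E'
  set E : ℝ → ℝ := fun t => u t - (u a + c * (t - a)) + 1/(2*β) * ((t - a) * (t - b) * f t)
    with hEdef
  set E' : ℝ → ℝ := fun t =>
    u' t - c + 1/(2*β) * ((2*t - a - b) * f t + (t - a) * (t - b) * f' t) with hE'def
  have hE : ∀ t ∈ Set.Icc a b, HasDerivWithinAt E (E' t) (Set.Icc a b) t := by
    intro t ht
    have hp : HasDerivWithinAt (fun t => (t - a) * (t - b)) (2*t - a - b) (Set.Icc a b) t := by
      have := ((hasDerivWithinAt_id t (Set.Icc a b)).sub_const a).mul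
        ((hasDerivWithinAt_id t (Set.Icc a b)).sub_const b)
      convert this using 1 <;> (try rfl) <;> first | (simp only [id_eq]; ring) | ring
    have h1 : HasDerivWithinAt (fun t => (t - a) * (t - b) * f t)
        ((2*t - a - b) * f t + (t - a) * (t - b) * f' t) (Set.Icc a b) t := by
      have := hp.mul (hf' t ht)
      convert this using 1 <;> (try rfl) <;> first | (simp only [id_eq]; ring) | ring
    have h2 : HasDerivWithinAt (fun t => u a + c * (t - a)) c (Set.Icc a b) t := by
      have := (((hasDerivWithinAt_id t (Set.Icc a b)).sub_const a).const_mul c).const_add (u a)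
      convert this using 1 <;> (try rfl) <;> first | (simp only [id_eq]; ring) | ring
    have := ((hu' t ht).sub h2).add (h1.const_mul (1/(2*β)))
    convert this using 1 <;> (try rfl) <;> (try simp only [hE'def]) <;> ring
  -- Φ and its derivative
  set Φ : ℝ → ℝ := fun t => u' t - c + 1/(2*β) * ((2*t - a - b) * f t) with hΦdef
  have hΦ : ∀ t ∈ Set.Icc a b,
      HasDerivWithinAt Φ (1/(2*β) * ((2*t - a - b) * f' t)) (Set.Icc a b) t := by
    intro t ht
    have hl : HasDerivWithinAt (fun t : ℝ => 2*t - a - b) 2 (Set.Icc a b) t := by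
      have := (((hasDerivWithinAt_id t (Set.Icc a b)).const_mul 2).sub_const a).sub_const b
      convert this using 1 <;> (try rfl) <;> first | ring | (funext s; ring) | norm_num
    have h1 : HasDerivWithinAt (fun t => (2*t - a - b) * f t)
        (2 * f t + (2*t - a - b) * f' t) (Set.Icc a b) t := hl.mul (hf' t ht)
    have := ((hu'' t ht).sub_const c).add (h1.const_mul (1/(2*β)))
    convert this using 1 <;> try rfl
    have hu2 : u'' t = -f t / β := by
      field_simp
      linarith [hode t ht]
    rw [hu2]
    field_simp
    ring
  -- Rolle
  have hEab : E a = E b := by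
    simp only [hEdef, hcdef]
    field_simp
    try ring
  have hEc : ContinuousOn E (Set.Icc a b) := fun t ht => (hE t ht).continuousWithinAt
  obtain ⟨ξ, hξ, hξ0⟩ := exists_hasDerivAt_eq_zero hab hEc hEab (fun t ht =>
    (hE t (Set.Ioo_subset_Icc_self ht)).hasDerivAt (Icc_mem_nhds ht.1 ht.2))
  have hξI : ξ ∈ Set.Icc a b := Set.Ioo_subset_Icc_self hξ
  -- comparison function H
  set m := (a + b) / 2 with hmdef
  set H : ℝ → ℝ := fun t => M/(2*β) * ((t - m) * |t - m|) with hHdef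
  have hH : ∀ t ∈ Set.Icc a b,
      HasDerivWithinAt H (M/(2*β) * (2 * |t - m|)) (Set.Icc a b) t :=
    fun t _ => ((aux_mul_abs m t).const_mul (M/(2*β))).hasDerivWithinAt
  have hMβ : (0:ℝ) ≤ M/(2*β) := div_nonneg hM0 h2β.le
  have hbd : ∀ t ∈ Set.Icc a b,
      |1/(2*β) * ((2*t - a - b) * f' t)| ≤ M/(2*β) * (2 * |t - m|) := by
    intro t ht
    have h2t : 2*t - a - b = 2*(t - m) := by rw [hmdef]; ring
    rw [abs_mul, abs_mul, h2t, abs_mul, abs_two,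
      abs_of_pos (by positivity : (0:ℝ) < 1/(2*β))]
    have hft := hM t ht
    have h0 : (0:ℝ) ≤ |t - m| := abs_nonneg _
    have h1 : (0:ℝ) ≤ |f' t| := abs_nonneg _
    rw [div_mul_eq_mul_div, one_mul]
    rw [div_mul_eq_mul_div]
    apply div_le_div_of_nonneg_right ?_ h2β.le
    nlinarith
  have hcomp : ∀ p ∈ Set.Icc a b, ∀ q ∈ Set.Icc a b, p ≤ q → |Φ q - Φ p| ≤ H q - H p :=
    fun p hp q hq hpq => aux_comp hΦ hH hbd hp hq hpq
  have habs2 : ∀ p q : ℝ, (p - m) * |p - m| - (q - m) * |q - m| ≤ (p - m)^2 + (q - m)^2 := by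
    intro p q
    nlinarith [le_abs_self (p - m), abs_nonneg (p - m), sq_abs (p - m),
      neg_abs_le (q - m), abs_nonneg (q - m), sq_abs (q - m)]
  have B1 : |Φ x - Φ ξ| ≤ M/(2*β) * ((x - m)^2 + (ξ - m)^2) := by
    rcases le_total x ξ with h | h
    · calc |Φ x - Φ ξ| = |Φ ξ - Φ x| := abs_sub_comm _ _
        _ ≤ H ξ - H x := hcomp x hx ξ hξI h
        _ = M/(2*β) * ((ξ - m) * |ξ - m| - (x - m) * |x - m|) := by rw [hHdef]; ring
        _ ≤ M/(2*β) * ((ξ - m)^2 + (x - m)^2) :=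
            mul_le_mul_of_nonneg_left (habs2 ξ x) hMβ
        _ = M/(2*β) * ((x - m)^2 + (ξ - m)^2) := by ring
    · calc |Φ x - Φ ξ| ≤ H x - H ξ := hcomp ξ hξI x hx h
        _ = M/(2*β) * ((x - m) * |x - m| - (ξ - m) * |ξ - m|) := by rw [hHdef]; ring
        _ ≤ M/(2*β) * ((x - m)^2 + (ξ - m)^2) :=
            mul_le_mul_of_nonneg_left (habs2 x ξ) hMβ
  have hquad : ∀ t ∈ Set.Icc a b,
      |1/(2*β) * ((t - a) * (t - b) * f' t)| ≤ M/(2*β) * ((b - a)^2/4 - (t - m)^2) := by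
    intro t ht
    have h1 : |(t - a) * (t - b)| = (b - a)^2/4 - (t - m)^2 := by
      rw [abs_of_nonpos (by nlinarith [ht.1, ht.2] : (t - a) * (t - b) ≤ 0), hmdef]
      ring
    calc |1/(2*β) * ((t - a) * (t - b) * f' t)|
        = 1/(2*β) * (|(t - a) * (t - b)| * |f' t|) := by
          rw [abs_mul, abs_mul, abs_of_pos (by positivity : (0:ℝ) < 1/(2*β))]
      _ ≤ 1/(2*β) * (((b - a)^2/4 - (t - m)^2) * M) := by
          rw [h1]
          apply mul_le_mul_of_nonneg_left ?_ (by positivity)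
          apply mul_le_mul_of_nonneg_left (hM t ht)
          rw [← h1]; exact abs_nonneg _
      _ = M/(2*β) * ((b - a)^2/4 - (t - m)^2) := by ring
  -- key identity
  have hkey : u' x - (c - 1/(2*β) * ((2*x - a - b) * f x + (x - a) * (x - b) * f' x))
      = (Φ x - Φ ξ) + 1/(2*β) * ((x - a) * (x - b) * f' x)
        - 1/(2*β) * ((ξ - a) * (ξ - b) * f' ξ) := by
    have h0 : E' ξ = 0 := hξ0
    simp only [hE'def, hΦdef] at h0 ⊢
    linarith [h0]
  rw [hkey]
  calc |(Φ x - Φ ξ) + 1/(2*β) * ((x - a) * (x - b) * f' x)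
        - 1/(2*β) * ((ξ - a) * (ξ - b) * f' ξ)|
      ≤ |Φ x - Φ ξ| + |1/(2*β) * ((x - a) * (x - b) * f' x)|
        + |1/(2*β) * ((ξ - a) * (ξ - b) * f' ξ)| := by
        calc |(Φ x - Φ ξ) + 1/(2*β) * ((x - a) * (x - b) * f' x)
              - 1/(2*β) * ((ξ - a) * (ξ - b) * f' ξ)|
            ≤ |(Φ x - Φ ξ) + 1/(2*β) * ((x - a) * (x - b) * f' x)|
              + |1/(2*β) * ((ξ - a) * (ξ - b) * f' ξ)| := abs_sub _ _
          _ ≤ _ := by gcongr; exact abs_add_le _ _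
    _ ≤ M/(2*β) * ((x - m)^2 + (ξ - m)^2) + M/(2*β) * ((b - a)^2/4 - (x - m)^2)
        + M/(2*β) * ((b - a)^2/4 - (ξ - m)^2) :=
        add_le_add (add_le_add B1 (hquad x hx)) (hquad ξ hξI)
    _ = M * (b - a)^2 / (2 * (2*β)) := by field_simp; ring
    _ ≤ 7 * (b - a)^2 / (24 * β) * M := by
        rw [div_mul_eq_mul_div, div_le_div_iff₀ (by linarith) (by linarith)]
        nlinarith [mul_nonneg (mul_nonneg hM0 (sq_nonneg (b - a))) hβ.le]
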